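/- Let 0 → A → B → C → 0 be a short exact sequence of R-modules in which C is w-split. Then A is w-split if and only if B is w-split. -/

import Mathlib

open CategoryTheory

universe u

section Defs
variable (R : Type u) [CommRing R]

/-- `J` is a Glaz–Vasconcelos ideal (GV-ideal): finitely generated and the natural map
`R → Hom_R(J, R)`, `r ↦ (x ↦ r•x)`, is an isomorphism. -/
def IsGVIdeal (J : Ideal R) : Prop :=
  J.FG ∧ Function.Bijective fun r : R =>
    ((LinearMap.lsmul R R r).comp J.subtype : J →ₗ[R] R)

variable (M : Type u) [AddCommGroup M] [Module R M]

/-- `M` is GV-torsion: every element is killed by some GV-ideal. -/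
def IsGVTorsion : Prop :=
  ∀ x : M, ∃ J : Ideal R, IsGVIdeal R J ∧ ∀ a ∈ J, a • x = 0

/-- `M` is GV-torsionfree: no nonzero element is killed by a GV-ideal. -/
def IsGVTorsionFree : Prop :=
  ∀ x : M, (∃ J : Ideal R, IsGVIdeal R J ∧ ∀ a ∈ J, a • x = 0) → x = 0

/-- The w-splitting condition on the epimorphism `g` of a short exact sequence:
there are a GV-ideal `⟨d₁,…,dₙ⟩` and maps `hₖ` with `g ∘ hₖ = (dₖ•·)`. -/
def IsWSplitSeq {B C : Type u} [AddCommGroup B] [Module R B] [AddCommGroup C] [Module R C]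
    (g : B →ₗ[R] C) : Prop :=
  ∃ (n : ℕ) (d : Fin n → R), IsGVIdeal R (Ideal.span (Set.range d)) ∧
    ∃ h : Fin n → (C →ₗ[R] B), ∀ k, ∀ c : C, g (h k c) = d k • c

/-- `M` is a w-split module: some short exact sequence `0 → K → P → M → 0` with
`P` projective is w-split. -/
def IsWSplitModule : Prop :=
  ∃ (P : Type u) (_ : AddCommGroup P) (_ : Module R P), Module.Projective R P ∧
    ∃ g : P →ₗ[R] M, Function.Surjective g ∧ IsWSplitSeq R g

/-- The Ext group `Ext^n_R(M, N)` as an object of `ModuleCat R`. -/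
noncomputable def extMod (n : ℕ) (N : Type u) [AddCommGroup N] [Module R N] : ModuleCat.{u} R :=
  ((Ext R (ModuleCat.{u} R) n).obj (Opposite.op (ModuleCat.of R M))).obj (ModuleCat.of R N)

/-- `M` is a w-module: GV-torsionfree and `Ext¹_R(R/J, M) = 0` for all GV-ideals `J`. -/
def IsWModule : Prop :=
  IsGVTorsionFree R M ∧
    ∀ J : Ideal R, IsGVIdeal R J → Subsingleton (extMod R (R ⧸ J) 1 M)

/-- `ι : M →ₗ E` exhibits `E` as a w-envelope `M_w` of the GV-torsionfree module `M`:
`E` is a w-module containing `M` with GV-torsion quotient `E/M`. -/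
def IsWEnvelope (E : Type u) [AddCommGroup E] [Module R E] (ι : M →ₗ[R] E) : Prop :=
  Function.Injective ι ∧ IsWModule R E ∧ IsGVTorsion R (E ⧸ LinearMap.range ι)

/-- `M` is w-projective: `Ext¹_R(L(M), N)` is GV-torsion for every GV-torsionfree
w-module `N`, where `L(M) = (M/tor_GV(M))_w`. -/
def IsWProjective : Prop :=
  ∀ (T : Submodule R M),
    (∀ x : M, x ∈ T ↔ ∃ J : Ideal R, IsGVIdeal R J ∧ ∀ a ∈ J, a • x = 0) →
    ∀ (L : Type u) (_ : AddCommGroup L) (_ : Module R L) (ι : (M ⧸ T) →ₗ[R] L),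
      IsWEnvelope R (M ⧸ T) L ι →
      ∀ (N : Type u) (_ : AddCommGroup N) (_ : Module R N),
        IsGVTorsionFree R N → IsWModule R N → IsGVTorsion R (extMod R L 1 N)

/-- `I` is a w-ideal: `I_w = I`, i.e. any `x` with `Jx ⊆ I` for some GV-ideal `J`
already lies in `I`. -/
def IsWIdeal (I : Ideal R) : Prop :=
  ∀ x : R, (∃ J : Ideal R, IsGVIdeal R J ∧ ∀ a ∈ J, a * x ∈ I) → x ∈ I

/-- `I` is a maximal w-ideal: maximal among proper w-ideals of `R`. -/
def IsMaximalWIdeal (I : Ideal R) : Prop :=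
  I ≠ ⊤ ∧ IsWIdeal R I ∧ ∀ I' : Ideal R, IsWIdeal R I' → I' ≠ ⊤ → I ≤ I' → I = I'

end Defs

section Aux
variable {R : Type u} [CommRing R]

/-- The natural map `R →ₗ[R] Hom(J, R)` as a bundled linear map. -/
noncomputable def theta (J : Ideal R) : R →ₗ[R] (J →ₗ[R] R) where
  toFun r := (LinearMap.lsmul R R r).comp J.subtype
  map_add' x y := by ext j; simp [add_mul]
  map_smul' c x := by ext j; simp [mul_assoc]

@[simp] theorem theta_apply (J : Ideal R) (r : R) (x : J) : theta J r x = r * x := rfl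

theorem isGVIdeal_iff_theta (J : Ideal R) :
    IsGVIdeal R J ↔ J.FG ∧ Function.Bijective (theta J) := Iff.rfl


/-- The product of two GV-ideals is a GV-ideal. -/
theorem IsGVIdeal.mul {I J : Ideal R} (hI : IsGVIdeal R I) (hJ : IsGVIdeal R J) :
    IsGVIdeal R (I * J) := by
  rw [isGVIdeal_iff_theta] at hI hJ ⊢
  obtain ⟨hIfg, hIb⟩ := hI
  obtain ⟨hJfg, hJb⟩ := hJ
  refine ⟨Submodule.FG.mul hIfg hJfg, ?_, ?_⟩
  · rw [injective_iff_map_eq_zero]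
    intro r hr
    have hx : ∀ x ∈ I, r * x = 0 := by
      intro x hx
      have h0 : theta J (r * x) = 0 := by
        ext ⟨y, hy⟩
        have := LinearMap.congr_fun hr ⟨x * y, Ideal.mul_mem_mul hx hy⟩
        simpa [mul_assoc] using this
      exact (injective_iff_map_eq_zero (theta J)).1 hJb.1 _ h0
    apply (injective_iff_map_eq_zero (theta I)).1 hIb.1
    ext ⟨x, hxI⟩
    simpa using hx x hxI
  · intro φ
    let eJ : R ≃ₗ[R] (J →ₗ[R] R) := LinearEquiv.ofBijective (theta J) hJb
    let eI : R ≃ₗ[R] (I →ₗ[R] R) := LinearEquiv.ofBijective (theta I) hIb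
    let Φ : I →ₗ[R] (J →ₗ[R] R) :=
      { toFun := fun x =>
          { toFun := fun y => φ ⟨x.1 * y.1, Ideal.mul_mem_mul x.2 y.2⟩
            map_add' := fun y y' => by
              rw [← map_add]
              exact congrArg φ (Subtype.ext (by simp [mul_add]))
            map_smul' := fun c y => by
              rw [RingHom.id_apply, ← map_smul]
              exact congrArg φ (Subtype.ext (by simp [smul_eq_mul]; ring)) }
        map_add' := fun x x' => by
          ext y
          simp only [LinearMap.coe_mk, AddHom.coe_mk, LinearMap.add_apply]
          rw [← map_add]
          exact congrArg φ (Subtype.ext (by simp [add_mul]))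
        map_smul' := fun c x => by
          ext y
          simp only [LinearMap.coe_mk, AddHom.coe_mk, RingHom.id_apply,
            LinearMap.smul_apply]
          rw [← map_smul]
          exact congrArg φ (Subtype.ext (by simp [smul_eq_mul]; ring)) }
    let ψ : I →ₗ[R] R := eJ.symm.toLinearMap ∘ₗ Φ
    refine ⟨eI.symm ψ, ?_⟩
    have hψ : ∀ x : I, theta J (ψ x) = Φ x := fun x => eJ.apply_symm_apply (Φ x)
    have hr : theta I (eI.symm ψ) = ψ := eI.apply_symm_apply ψ
    have key : ∀ z, ∀ hz : z ∈ I * J, (eI.symm ψ) * z = φ ⟨z, hz⟩ := by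
      intro z hz
      induction hz using Submodule.mul_induction_on' with
      | mem_mul_mem x hx y hy =>
          have h1 : (eI.symm ψ) * x = ψ ⟨x, hx⟩ := by
            simpa using LinearMap.congr_fun hr ⟨x, hx⟩
          have h2 : ψ ⟨x, hx⟩ * y = φ ⟨x * y, Ideal.mul_mem_mul hx hy⟩ := by
            simpa [Φ] using LinearMap.congr_fun (hψ ⟨x, hx⟩) ⟨y, hy⟩
          calc (eI.symm ψ) * (x * y) = ((eI.symm ψ) * x) * y := by ring
            _ = ψ ⟨x, hx⟩ * y := by rw [h1]
            _ = φ ⟨x * y, Ideal.mul_mem_mul hx hy⟩ := h2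
      | add x hx y hy ihx ihy =>
          have hxy : (⟨x + y, Submodule.add_mem _ hx hy⟩ : ↥(I * J))
              = ⟨x, hx⟩ + ⟨y, hy⟩ := rfl
          rw [mul_add, hxy, map_add, ihx, ihy]
    ext ⟨z, hz⟩
    simpa using key z hz

end Aux

section Aux2
variable {R : Type u} [CommRing R]

theorem isGVIdeal_span_range_mul {m n : ℕ} (e : Fin m → R) (d : Fin n → R)
    (he : IsGVIdeal R (Ideal.span (Set.range e))) (hd : IsGVIdeal R (Ideal.span (Set.range d))) :
    IsGVIdeal R (Ideal.span (Set.range fun i : Fin (m * n) =>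
      e (finProdFinEquiv.symm i).1 * d (finProdFinEquiv.symm i).2)) := by
  have hspan : Ideal.span (Set.range fun i : Fin (m * n) =>
        e (finProdFinEquiv.symm i).1 * d (finProdFinEquiv.symm i).2) =
      Ideal.span (Set.range e) * Ideal.span (Set.range d) := by
    rw [Ideal.span_mul_span']
    congr 1
    have h1 : (Set.range fun i : Fin (m * n) =>
        e (finProdFinEquiv.symm i).1 * d (finProdFinEquiv.symm i).2)
        = Set.range fun p : Fin m × Fin n => e p.1 * d p.2 :=
      Function.Surjective.range_comp finProdFinEquiv.symm.surjective
        (fun p : Fin m × Fin n => e p.1 * d p.2)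
    rw [h1]
    ext z
    constructor
    · rintro ⟨⟨j, k⟩, rfl⟩
      exact Set.mul_mem_mul ⟨j, rfl⟩ ⟨k, rfl⟩
    · rintro ⟨x, ⟨j, rfl⟩, y, ⟨k, rfl⟩, rfl⟩
      exact ⟨(j, k), rfl⟩
  rw [hspan]
  exact he.mul hd

/-- Corestriction of a map whose range lies in the range of an injection. -/
noncomputable def liftOfRangeLe {A B X : Type u} [AddCommGroup A] [Module R A]
    [AddCommGroup B] [Module R B] [AddCommGroup X] [Module R X]
    (f : A →ₗ[R] B) (hf : Function.Injective f) (u : X →ₗ[R] B)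
    (h : ∀ x, u x ∈ LinearMap.range f) : X →ₗ[R] A :=
  ((LinearEquiv.ofInjective f hf).symm : LinearMap.range f →ₗ[R] A) ∘ₗ
    u.codRestrict (LinearMap.range f) h

theorem liftOfRangeLe_spec {A B X : Type u} [AddCommGroup A] [Module R A]
    [AddCommGroup B] [Module R B] [AddCommGroup X] [Module R X]
    (f : A →ₗ[R] B) (hf : Function.Injective f) (u : X →ₗ[R] B)
    (h : ∀ x, u x ∈ LinearMap.range f) (x : X) :
    f (liftOfRangeLe f hf u h x) = u x := by
  simpa [liftOfRangeLe] using
    LinearEquiv.ofInjective_symm_apply (h := hf) ⟨u x, h x⟩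

end Aux2




/-- If `0 → A → B → C → 0` is exact with `C` w-split, then `A` is w-split iff `B` is. -/
theorem stmt10 {R : Type u} [CommRing R] {A B C : Type u}
    [AddCommGroup A] [Module R A] [AddCommGroup B] [Module R B] [AddCommGroup C] [Module R C]
    (f : A →ₗ[R] B) (g : B →ₗ[R] C)
    (hf : Function.Injective f) (hg : Function.Surjective g)
    (hfg : LinearMap.range f = LinearMap.ker g)
    (hC : IsWSplitModule R C) :
    IsWSplitModule R A ↔ IsWSplitModule R B := by
  classical
  obtain ⟨PC, iC1, iC2, projC, q, hq, n, d, hdGV, s, hs⟩ := hC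
  haveI := projC
  obtain ⟨σ, hσ⟩ := Module.projective_lifting_property g q hg
  have hσ' : ∀ p, g (σ p) = q p := fun p => LinearMap.congr_fun hσ p
  -- the maps `t k : B →ₗ[R] A` with `f (t k b) = d k • b - σ (s k (g b))`
  set u : Fin n → (B →ₗ[R] B) :=
    fun k => d k • (LinearMap.id : B →ₗ[R] B) - σ ∘ₗ ((s k) ∘ₗ g) with hu_def
  have hu : ∀ k, ∀ b : B, u k b ∈ LinearMap.range f := by
    intro k b
    rw [hfg, LinearMap.mem_ker]
    simp only [hu_def, LinearMap.sub_apply, LinearMap.smul_apply, LinearMap.id_apply,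
      LinearMap.coe_comp, Function.comp_apply, map_sub, map_smul]
    rw [hσ', hs]
    simp
  set t : Fin n → (B →ₗ[R] A) := fun k => liftOfRangeLe f hf (u k) (hu k) with ht_def
  have ht : ∀ k, ∀ b : B, f (t k b) = d k • b - σ (s k (g b)) := by
    intro k b
    have := liftOfRangeLe_spec f hf (u k) (hu k) b
    simpa [hu_def] using this
  have htf : ∀ k, ∀ a : A, t k (f a) = d k • a := by
    intro k a
    apply hf
    rw [ht, map_smul]
    have hgf : g (f a) = 0 := by
      rw [← LinearMap.mem_ker, ← hfg]
      exact LinearMap.mem_range_self f a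
    rw [hgf, map_zero, map_zero, sub_zero]
  constructor
  · -- A w-split → B w-split
    rintro ⟨PA, iA1, iA2, projA, α, hα, m, e, heGV, h', hh'⟩
    haveI := projA
    refine ⟨PA × PC, inferInstance, inferInstance, inferInstance, ?_⟩
    refine ⟨(f ∘ₗ α) ∘ₗ (LinearMap.fst R PA PC) + σ ∘ₗ (LinearMap.snd R PA PC), ?_, ?_⟩
    · intro b
      obtain ⟨p', hp'⟩ := hq (g b)
      have hker : b - σ p' ∈ LinearMap.range f := by
        rw [hfg, LinearMap.mem_ker, map_sub, hσ', hp', sub_self]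
      obtain ⟨a, ha⟩ := hker
      obtain ⟨p, hp⟩ := hα a
      refine ⟨(p, p'), ?_⟩
      simp only [LinearMap.add_apply, LinearMap.coe_comp, Function.comp_apply,
        LinearMap.fst_apply, LinearMap.snd_apply, hp, ha]
      abel
    · refine ⟨m * n, fun i => e (finProdFinEquiv.symm i).1 * d (finProdFinEquiv.symm i).2,
        isGVIdeal_span_range_mul e d heGV hdGV, ?_⟩
      refine ⟨fun i => LinearMap.prod
        ((h' (finProdFinEquiv.symm i).1) ∘ₗ (t (finProdFinEquiv.symm i).2))
        (e (finProdFinEquiv.symm i).1 • ((s (finProdFinEquiv.symm i).2) ∘ₗ g)), ?_⟩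
      intro i b
      set j := (finProdFinEquiv.symm i).1
      set k := (finProdFinEquiv.symm i).2
      simp only [LinearMap.add_apply, LinearMap.coe_comp, Function.comp_apply,
        LinearMap.prod_apply, Function.prod, LinearMap.fst_apply, LinearMap.snd_apply,
        LinearMap.smul_apply, hh', map_smul]
      rw [ht, mul_smul]
      rw [smul_sub]
      abel
  · -- B w-split → A w-split
    rintro ⟨PB, iB1, iB2, projB, β, hβ, m, e, heGV, h', hh'⟩
    haveI := projB
    haveI : Module.Projective R (DirectSum (Fin n) fun _ => PB) :=
      inferInstanceAs (Module.Projective R (Π₀ _ : Fin n, PB))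
    haveI : Module.Projective R (Fin n → PB) :=
      Module.Projective.of_equiv (DirectSum.linearEquivFunOnFintype R (Fin n)
        (fun _ : Fin n => PB))
    refine ⟨(Fin n → PB) × (A →₀ R), inferInstance, inferInstance, inferInstance, ?_⟩
    set lin : (A →₀ R) →ₗ[R] A := Finsupp.linearCombination R (_root_.id : A → A)
      with hlin_def
    refine ⟨LinearMap.coprod (∑ k, (t k ∘ₗ β) ∘ₗ LinearMap.proj k) lin, ?_, ?_⟩
    · intro a
      refine ⟨(0, Finsupp.single a 1), ?_⟩
      simp [hlin_def]
    · refine ⟨m * n, fun i => e (finProdFinEquiv.symm i).1 * d (finProdFinEquiv.symm i).2,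
        isGVIdeal_span_range_mul e d heGV hdGV, ?_⟩
      refine ⟨fun i => LinearMap.prod
        ((LinearMap.single R (fun _ : Fin n => PB) (finProdFinEquiv.symm i).2) ∘ₗ
          ((h' (finProdFinEquiv.symm i).1) ∘ₗ f)) 0, ?_⟩
      intro i a
      simp only [LinearMap.coprod_apply, LinearMap.prod_apply, Function.prod,
        LinearMap.coe_comp, Function.comp_apply, LinearMap.zero_apply, map_zero,
        LinearMap.sum_apply, LinearMap.proj_apply, LinearMap.coe_single]
      rw [add_zero]
      have hsum : ∀ (kk : Fin n) (v : PB), (∑ x : Fin n,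
          t x (β ((Pi.single kk v : ∀ _ : Fin n, PB) x)))
          = t kk (β v) := by
        intro kk v
        rw [Finset.sum_eq_single kk]
        · simp
        · intro k' _ hk'
          simp [Pi.single_eq_of_ne hk']
        · simp
      rw [hsum, hh', map_smul, htf, mul_smul]
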